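/- Let G be a connected graph and L a list assignment with |L(v)| = deg(v) for every vertex v. If G contains an induced even cycle, then G has a proper L-coloring. -/

import Mathlib

open SimpleGraph Finset
open Fin.CommRing

private lemma closer_nbr {V : Type*} (G : SimpleGraph V) (hconn : G.Connected) (c0 v : V)
    (hv : v ≠ c0) : ∃ w, G.Adj v w ∧ G.dist c0 w < G.dist c0 v := by
  obtain ⟨p, hp⟩ := (hconn v c0).exists_walk_length_eq_dist
  cases p with
  | nil => exact absurd rfl hv
  | cons h q =>
      rename_i w
      refine ⟨w, h, ?_⟩
      have h1 : G.dist c0 w ≤ q.length := by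
        rw [G.dist_comm]; exact G.dist_le q
      have h2 : (SimpleGraph.Walk.cons h q).length = G.dist v c0 := hp
      rw [SimpleGraph.Walk.length_cons] at h2
      rw [G.dist_comm (u := c0) (v := v)]
      omega

private lemma greedy_outside {V : Type*} [Fintype V] [DecidableEq V] (G : SimpleGraph V)
    [DecidableRel G.Adj] (hconn : G.Connected)
    (L : V → Finset ℕ) (hL : ∀ v, (L v).card = G.degree v)
    (C : Finset V) (c0 : V) (hc0 : c0 ∈ C) :
    ∃ φ : V → ℕ, (∀ v ∉ C, φ v ∈ L v) ∧
      (∀ u v, u ∉ C → v ∉ C → G.Adj u v → φ u ≠ φ v) := by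
  classical
  set d : V → ℕ := fun v => G.dist c0 v with hd
  suffices H : ∀ n (T : Finset V), T.card = n → (∀ v ∈ T, v ∉ C) →
      (∀ u, u ∉ C → u ∉ T → ∀ w ∈ T, d u ≤ d w) →
      ∃ φ : V → ℕ, (∀ v ∈ T, φ v ∈ L v) ∧
        (∀ u v, u ∈ T → v ∈ T → G.Adj u v → φ u ≠ φ v) by
    obtain ⟨φ, h1, h2⟩ := H _ (Finset.univ.filter (· ∉ C)) rfl (by simp)
      (by intro u hu huT; simp [hu] at huT)
    exact ⟨φ, fun v hv => h1 v (by simp [hv]),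
      fun u v hu hv => h2 u v (by simp [hu]) (by simp [hv])⟩
  intro n
  induction n with
  | zero =>
      intro T hT _ _
      rw [Finset.card_eq_zero] at hT; subst hT
      exact ⟨fun _ => 0, by simp, by simp⟩
  | succ n ih =>
      intro T hT hTC hinv
      have hne : T.Nonempty := Finset.card_pos.mp (by omega)
      -- v : element of T with minimal d
      obtain ⟨v, hvT, hvmin⟩ := Finset.exists_min_image T d hne
      set T' : Finset V := T.erase v with hT'
      have hT'card : T'.card = n := by
        rw [hT', Finset.card_erase_of_mem hvT, hT]; omega
      have hT'sub : ∀ x ∈ T', x ∈ T := fun x hx => Finset.mem_of_mem_erase hx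
      obtain ⟨φ', h1', h2'⟩ := ih T' hT'card (fun x hx => hTC x (hT'sub x hx))
        (by
          intro u hu huT' w hw
          by_cases huT : u ∈ T
          · have : u = v := by
              by_contra hne'
              exact huT' (Finset.mem_erase.mpr ⟨hne', huT⟩)
            subst this
            exact hvmin w (hT'sub w hw)
          · exact hinv u hu huT w (hT'sub w hw))
      -- colored neighbors of v
      set N : Finset V := (G.neighborFinset v).filter (· ∈ T') with hN
      have hvc0 : v ≠ c0 := fun h => hTC v hvT (h ▸ hc0)
      obtain ⟨w0, hw0adj, hw0d⟩ := closer_nbr G hconn c0 v hvc0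
      have hw0T : w0 ∉ T := by
        intro hmem
        exact absurd (hvmin w0 hmem) (by simp only [hd]; omega)
      have hw0N : w0 ∉ N := by
        intro hmem
        exact hw0T (hT'sub w0 ((Finset.mem_filter.mp hmem).2))
      have hNcard : N.card < G.degree v := by
        have hsub : N ⊆ (G.neighborFinset v).erase w0 := by
          intro x hx
          rcases Finset.mem_filter.mp hx with ⟨hx1, hx2⟩
          exact Finset.mem_erase.mpr ⟨fun h => hw0N (h ▸ hx), hx1⟩
        calc N.card ≤ ((G.neighborFinset v).erase w0).card := Finset.card_le_card hsub
          _ < (G.neighborFinset v).card := by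
              rw [Finset.card_erase_of_mem (by simpa using hw0adj)]
              have : 0 < (G.neighborFinset v).card :=
                Finset.card_pos.mpr ⟨w0, by simpa using hw0adj⟩
              omega
          _ = G.degree v := rfl
      have hfree : ∃ c ∈ L v, c ∉ N.image φ' := by
        by_contra h
        push_neg at h
        have : L v ⊆ N.image φ' := h
        have := Finset.card_le_card this
        have h2 := Finset.card_image_le (s := N) (f := φ')
        rw [hL v] at this
        omega
      obtain ⟨c, hcL, hcN⟩ := hfree
      refine ⟨Function.update φ' v c, ?_, ?_⟩
      · intro x hx
        by_cases hxv : x = v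
        · subst hxv; simpa using hcL
        · rw [Function.update_of_ne hxv]
          exact h1' x (Finset.mem_erase.mpr ⟨hxv, hx⟩)
      · intro a b ha hb hadj
        by_cases hav : a = v <;> by_cases hbv : b = v
        · subst hav; subst hbv; exact absurd hadj (G.irrefl)
        · subst hav
          rw [Function.update_self, Function.update_of_ne hbv]
          intro heq
          apply hcN
          exact Finset.mem_image.mpr ⟨b, Finset.mem_filter.mpr
            ⟨by simpa using hadj, Finset.mem_erase.mpr ⟨hbv, hb⟩⟩, heq.symm⟩
        · subst hbv
          rw [Function.update_self, Function.update_of_ne hav]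
          intro heq
          apply hcN
          exact Finset.mem_image.mpr ⟨a, Finset.mem_filter.mpr
            ⟨by simpa using hadj.symm, Finset.mem_erase.mpr ⟨hav, ha⟩⟩, heq⟩
        · rw [Function.update_of_ne hav, Function.update_of_ne hbv]
          exact h2' a b (Finset.mem_erase.mpr ⟨hav, ha⟩) (Finset.mem_erase.mpr ⟨hbv, hb⟩) hadj

private lemma cycle_choosable (n : ℕ) (heven : Even (n + 4)) (M : Fin (n + 4) → Finset ℕ)
    (hM : ∀ i, 2 ≤ (M i).card) :
    ∃ ρ : Fin (n + 4) → ℕ, (∀ i, ρ i ∈ M i) ∧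
      ∀ x : Fin (n + 4), ρ x ≠ ρ (x + 1) := by
  classical
  by_cases hall : ∀ i : Fin (n + 4), M (i + 1) ⊆ M i
  · -- all lists equal
    have hstep : ∀ (k : ℕ) (i : Fin (n + 4)), M (i + (k : Fin (n + 4))) ⊆ M i := by
      intro k
      induction k with
      | zero => intro i; simp
      | succ k ih =>
          intro i
          have : ((k + 1 : ℕ) : Fin (n + 4)) = (k : Fin (n + 4)) + 1 := by push_cast; ring
          rw [this, ← add_assoc]
          exact (hall _).trans (ih i)
    have heq : ∀ i : Fin (n + 4), M (i + 1) = M i := by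
      intro i
      refine Finset.Subset.antisymm (hall i) ?_
      have h1 : M ((i + 1) + ((n + 3 : ℕ) : Fin (n + 4))) ⊆ M (i + 1) := hstep _ _
      have h2 : (i + 1) + ((n + 3 : ℕ) : Fin (n + 4)) = i := by
        have : ((n + 4 : ℕ) : Fin (n + 4)) = 0 := by
          simp [Fin.natCast_self]
        push_cast at this ⊢
        linear_combination this
      rwa [h2] at h1
    have hall0 : ∀ i : Fin (n + 4), M i = M 0 := by
      have key : ∀ k : ℕ, M (k : Fin (n + 4)) = M 0 := by
        intro k
        induction k with
        | zero => simp
        | succ k ih =>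
            have : ((k + 1 : ℕ) : Fin (n + 4)) = (k : Fin (n + 4)) + 1 := by push_cast; ring
            rw [this, heq, ih]
      intro i
      have : ((i.val : ℕ) : Fin (n + 4)) = i := Fin.cast_val_eq_self i
      rw [← this, key]
    have h01 : 1 < (M 0).card := by have := hM 0; omega
    obtain ⟨a, ha, b, hb, hab⟩ := Finset.one_lt_card.mp h01
    refine ⟨fun x => if Even x.val then a else b, ?_, ?_⟩
    · intro i
      show (if Even i.val then a else b) ∈ M i
      rw [hall0 i]; split <;> assumption
    · intro x
      have hval : (x + 1).val = (x.val + 1) % (n + 4) := by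
        rw [Fin.val_add]
        norm_num
      have hpar : (x + 1).val % 2 = (x.val + 1) % 2 := by
        rw [hval]
        exact Nat.mod_mod_of_dvd _ (even_iff_two_dvd.mp heven)
      have : ¬ (Even x.val ↔ Even (x + 1).val) := by
        rw [Nat.even_iff, Nat.even_iff, hpar, Nat.add_mod]
        omega
      show (if Even x.val then a else b) ≠ (if Even (x + 1).val then a else b)
      by_cases h : Even x.val
      · have h2 : ¬ Even (x+1).val := fun hh => this ⟨fun _ => hh, fun _ => h⟩
        rw [if_pos h, if_neg h2]; exact hab
      · have h2 : Even (x+1).val := by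
          by_contra hh
          exact this ⟨fun hx => absurd hx h, fun hx => absurd hx hh⟩
        rw [if_neg h, if_pos h2]; exact hab.symm
  · push_neg at hall
    obtain ⟨i0, hni⟩ := hall
    obtain ⟨c, hc1, hc2⟩ := Finset.not_subset.mp hni
    set M' : ℕ → Finset ℕ := fun k => M (i0 + 1 + (k : Fin (n + 4))) with hM'
    have hM'card : ∀ k, 2 ≤ (M' k).card := fun k => hM _
    let ρN : ℕ → ℕ := fun k => Nat.rec c
      (fun k prev => if h : ((M' (k + 1)).erase prev).Nonempty then h.choose else 0) k
    have hne : ∀ k, ((M' (k + 1)).erase (ρN k)).Nonempty := by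
      intro k
      obtain ⟨y, hy1, hy2⟩ := Finset.exists_mem_ne
        (by have := hM'card (k+1); omega : 1 < (M' (k+1)).card) (ρN k)
      exact ⟨y, Finset.mem_erase.mpr ⟨hy2, hy1⟩⟩
    have hρsucc : ∀ k, ρN (k + 1) = (hne k).choose := by
      intro k
      show (if h : ((M' (k + 1)).erase (ρN k)).Nonempty then h.choose else 0) = _
      rw [dif_pos (hne k)]
    have hmem : ∀ k, ρN k ∈ M' k := by
      intro k
      cases k with
      | zero =>
          show c ∈ M' 0
          simpa [hM'] using hc1
      | succ k =>
          rw [hρsucc k]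
          exact Finset.mem_of_mem_erase (hne k).choose_spec
    have hdiff : ∀ k, ρN (k + 1) ≠ ρN k := by
      intro k
      rw [hρsucc k]
      exact Finset.ne_of_mem_erase (hne k).choose_spec
    refine ⟨fun x => ρN (x - (i0 + 1)).val, ?_, ?_⟩
    · intro i
      have h := hmem (i - (i0 + 1)).val
      show ρN (i - (i0 + 1)).val ∈ M i
      have harg : i0 + 1 + (((i - (i0 + 1)).val : ℕ) : Fin (n + 4)) = i := by
        rw [Fin.cast_val_eq_self]; ring
      rw [hM'] at h
      simp only at h
      rwa [harg] at h
    · intro x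
      show ρN (x - (i0 + 1)).val ≠ ρN (x + 1 - (i0 + 1)).val
      set t := (x - (i0 + 1)).val with ht
      have htlt : t < n + 4 := (x - (i0 + 1)).isLt
      by_cases hmax : t = n + 3
      · -- x = i0, x + 1 = i0 + 1
        have hx : x = i0 := by
          have : x - (i0 + 1) = ((n + 3 : ℕ) : Fin (n + 4)) := by
            rw [← Fin.cast_val_eq_self (x - (i0+1)), ← ht, hmax]
          have h2 : ((n + 3 : ℕ) : Fin (n + 4)) = -1 := by
            have h0 : ((n + 4 : ℕ) : Fin (n + 4)) = 0 := by simp [Fin.natCast_self]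
            push_cast at h0 ⊢
            linear_combination h0
          rw [h2] at this
          have := congrArg (· + (i0 + 1)) this
          simpa using this
        have hx1 : (x + 1 - (i0 + 1)).val = 0 := by
          rw [hx]; simp [add_sub_cancel_left, sub_self]
        rw [hx1]
        show ρN t ≠ c
        intro hEq
        apply hc2
        have := hmem t
        rw [hM'] at this
        simp only at this
        have harg : i0 + 1 + ((t : ℕ) : Fin (n + 4)) = i0 := by
          rw [hmax]
          have h0 : ((n + 4 : ℕ) : Fin (n + 4)) = 0 := by simp [Fin.natCast_self]
          push_cast at h0 ⊢
          linear_combination h0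
        rw [harg] at this
        rwa [hEq] at this
      · have hx1 : (x + 1 - (i0 + 1)).val = t + 1 := by
          have : x + 1 - (i0 + 1) = (x - (i0 + 1)) + 1 := by ring
          rw [this, Fin.val_add_one]
          split
          · rename_i hlast
            exfalso
            apply hmax
            rw [ht, hlast]
            simp [Fin.last]
          · rfl
        rw [hx1]
        exact (hdiff t).symm

/-- Let `G` be a connected graph and `L` a list assignment with `|L(v)| = deg(v)` for every
vertex `v`. If `G` contains an induced even cycle, then `G` has a proper `L`-coloring. -/
theorem stmt7 {V : Type*} [Fintype V] [DecidableEq V] (G : SimpleGraph V)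
    [DecidableRel G.Adj] (hconn : G.Connected)
    (L : V → Finset ℕ) (hL : ∀ v, (L v).card = G.degree v)
    (hcycle : ∃ m : ℕ, 4 ≤ m ∧ Even m ∧
      Nonempty (SimpleGraph.cycleGraph m ↪g G)) :
    ∃ φ : V → ℕ, (∀ v, φ v ∈ L v) ∧ ∀ u v, G.Adj u v → φ u ≠ φ v := by
  classical
  obtain ⟨m, hm4, hmeven, ⟨f⟩⟩ := hcycle
  obtain ⟨n, rfl⟩ : ∃ n, m = n + 4 := ⟨m - 4, by omega⟩
  have finj : Function.Injective (f : Fin (n + 4) → V) := f.injective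
  set C : Finset V := Finset.univ.image (f : Fin (n + 4) → V) with hC
  have hmemC : ∀ v, v ∈ C ↔ ∃ k, f k = v := by
    intro v; simp [hC]
  obtain ⟨φ, hφ1, hφ2⟩ := greedy_outside G hconn L hL C (f 0)
    ((hmemC _).mpr ⟨0, rfl⟩)
  -- adjacency within the cycle
  have hadj_iff : ∀ k j : Fin (n + 4), G.Adj (f k) (f j) ↔ (j = k - 1 ∨ j = k + 1) := by
    intro k j
    rw [f.map_adj_iff]
    rw [show (cycleGraph (n + 4)).Adj k j ↔ k - j = 1 ∨ j - k = 1 from cycleGraph_adj]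
    constructor
    · rintro (h | h)
      · left; linear_combination -h
      · right; linear_combination h
    · rintro (rfl | rfl)
      · left; ring
      · right; ring
  have h2ne : (2 : Fin (n + 4)) ≠ 0 := by
    intro h
    have h1 := congrArg Fin.val h
    have h2 : (2 : Fin (n + 4)).val = 2 % (n + 4) := rfl
    have h3 : (0 : Fin (n + 4)).val = 0 := rfl
    rw [h2, h3, Nat.mod_eq_of_lt (by omega)] at h1
    omega
  have hne_pm : ∀ k : Fin (n + 4), f (k - 1) ≠ f (k + 1) := by
    intro k h
    have := finj h
    apply h2ne
    linear_combination -this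
  have hinside : ∀ k : Fin (n + 4),
      (G.neighborFinset (f k)) ∩ C = {f (k - 1), f (k + 1)} := by
    intro k
    ext u
    simp only [Finset.mem_inter, mem_neighborFinset, hmemC, Finset.mem_insert,
      Finset.mem_singleton, hC, Finset.mem_image, Finset.mem_univ, true_and]
    constructor
    · rintro ⟨hadj, j, rfl⟩
      rcases (hadj_iff k j).mp hadj with h | h
      · exact Or.inl (by rw [h])
      · exact Or.inr (by rw [h])
    · rintro (rfl | rfl)
      · exact ⟨(hadj_iff k _).mpr (Or.inl rfl), _, rfl⟩
      · exact ⟨(hadj_iff k _).mpr (Or.inr rfl), _, rfl⟩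
  set M : Fin (n + 4) → Finset ℕ :=
    fun k => (L (f k)) \ ((G.neighborFinset (f k) \ C).image φ) with hM
  have hMcard : ∀ k, 2 ≤ (M k).card := by
    intro k
    have hin : ((G.neighborFinset (f k)) ∩ C).card = 2 := by
      rw [hinside k, Finset.card_insert_of_notMem (by simpa using hne_pm k),
        Finset.card_singleton]
    have hout : ((G.neighborFinset (f k)) \ C).card = G.degree (f k) - 2 := by
      have := Finset.card_sdiff_add_card_inter (G.neighborFinset (f k)) C
      rw [hin] at this
      have hd : (G.neighborFinset (f k)).card = G.degree (f k) := rfl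
      omega
    have himg : (((G.neighborFinset (f k)) \ C).image φ).card ≤ G.degree (f k) - 2 := by
      rw [← hout]; exact Finset.card_image_le
    have hsd : (L (f k)).card ≤ (M k).card + (((G.neighborFinset (f k)) \ C).image φ).card := by
      show (L (f k)).card ≤ (L (f k) \ ((G.neighborFinset (f k) \ C).image φ)).card +
        (((G.neighborFinset (f k)) \ C).image φ).card
      have := Finset.card_sdiff_add_card (L (f k)) ((G.neighborFinset (f k) \ C).image φ)
      have h2 := Finset.card_le_card
        (Finset.subset_union_left (s₁ := L (f k)) (s₂ := (G.neighborFinset (f k) \ C).image φ))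
      omega
    have hdeg2 : 2 ≤ G.degree (f k) := by
      have : f (k - 1) ∈ (G.neighborFinset (f k)) ∩ C := by
        rw [hinside k]; simp
      have h1 : ((G.neighborFinset (f k)) ∩ C).card = 2 := hin
      have := Finset.card_le_card (Finset.inter_subset_left
        (s₁ := G.neighborFinset (f k)) (s₂ := C))
      rw [h1] at this
      exact this
    have := hL (f k)
    omega
  obtain ⟨ρ, hρ1, hρ2⟩ := cycle_choosable n hmeven M hMcard
  set χ : V → ℕ := fun v => if h : ∃ k : Fin (n + 4), f k = v then ρ h.choose else φ v with hχ
  have hχf : ∀ k, χ (f k) = ρ k := by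
    intro k
    have h : ∃ j : Fin (n + 4), f j = f k := ⟨k, rfl⟩
    show (if h : ∃ j : Fin (n + 4), f j = f k then ρ h.choose else φ (f k)) = ρ k
    rw [dif_pos h]
    congr 1
    exact finj h.choose_spec
  have hχout : ∀ v, v ∉ C → χ v = φ v := by
    intro v hv
    show (if h : ∃ j : Fin (n + 4), f j = v then ρ h.choose else φ v) = φ v
    rw [dif_neg]
    intro h
    exact hv ((hmemC v).mpr h)
  have hMsdiff : ∀ k, ρ k ∈ L (f k) \ ((G.neighborFinset (f k) \ C).image φ) := by
    intro k
    have := hρ1 k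
    rw [hM] at this
    simpa using this
  refine ⟨χ, ?_, ?_⟩
  · intro v
    by_cases hv : v ∈ C
    · obtain ⟨k, rfl⟩ := (hmemC v).mp hv
      rw [hχf k]
      exact (Finset.mem_sdiff.mp (hMsdiff k)).1
    · rw [hχout v hv]; exact hφ1 v hv
  · intro u v hadj
    by_cases hu : u ∈ C <;> by_cases hv : v ∈ C
    · obtain ⟨k, rfl⟩ := (hmemC u).mp hu
      obtain ⟨j, rfl⟩ := (hmemC v).mp hv
      rw [hχf k, hχf j]
      rcases (hadj_iff k j).mp hadj with h | h
      · subst h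
        intro hEq
        apply hρ2 (k - 1)
        rw [show (k - 1) + 1 = k from by ring]
        exact hEq.symm
      · subst h
        exact hρ2 k
    · obtain ⟨k, rfl⟩ := (hmemC u).mp hu
      rw [hχf k, hχout v hv]
      intro heq
      apply (Finset.mem_sdiff.mp (hMsdiff k)).2
      exact Finset.mem_image.mpr ⟨v, Finset.mem_sdiff.mpr ⟨by simpa using hadj, hv⟩, heq.symm⟩
    · obtain ⟨k, rfl⟩ := (hmemC v).mp hv
      rw [hχf k, hχout u hu]
      intro heq
      apply (Finset.mem_sdiff.mp (hMsdiff k)).2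
      exact Finset.mem_image.mpr ⟨u, Finset.mem_sdiff.mpr ⟨by simpa using hadj.symm, hu⟩, heq⟩
    · rw [hχout u hu, hχout v hv]
      exact hφ2 u v hu hv hadj
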